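/- Let d ≥ 2, n ≥ 1, δ = 1/n, β ∈ (0,1], L > 0, and let τ : [0,1]^{d−1} → [0,1] satisfy |τ(x) − τ(y)| ≤ L·‖x−y‖_∞^β for all x, y ∈ [0,1]^{d−1}. Let Λ₊ = {(x,y) ∈ [0,1]^{d−1} × [0,1] : y > τ(x)} and let B = {α ∈ [n]^d : Sq(α)° ∩ ∂Λ₊ ≠ ∅}, where ∂Λ₊ is the boundary of Λ₊ in the subspace topology of [0,1]^d. Then |B| ≤ (L + 2)·δ^{β−d}. -/

import Mathlib

open MeasureTheory

noncomputable section

/-- The unit cube `[0,1]^k` as a subset of `Fin k → ℝ`. -/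
def unitCube (k : ℕ) : Set (Fin k → ℝ) := Set.univ.pi fun _ => Set.Icc (0 : ℝ) 1

/-- The closed grid hypercube of edge length `δ = 1/n` indexed by `γ ∈ [n]^k`. -/
def Sq (n : ℕ) {k : ℕ} (γ : Fin k → Fin n) : Set (Fin k → ℝ) :=
  Set.univ.pi fun i => Set.Icc ((γ i : ℝ) / n) (((γ i : ℝ) + 1) / n)

/-- `[0,1]^{k} × [0,1]`, the unit cube viewed as a product. -/
def cubeP (k : ℕ) : Set ((Fin k → ℝ) × ℝ) := (unitCube k) ×ˢ Set.Icc (0 : ℝ) 1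

/-- The grid hypercube `Sq_{d-1}(γ) × [jδ,(j+1)δ]` in the product representation. -/
def SqP (n k : ℕ) (γ : Fin k → Fin n) (j : Fin n) : Set ((Fin k → ℝ) × ℝ) :=
  (Sq n γ) ×ˢ Set.Icc ((j : ℝ) / n) (((j : ℝ) + 1) / n)

/-- The boundary of `A` in the subspace topology of `s`, as a subset of `X`. -/
def bdryIn {X : Type*} [TopologicalSpace X] (s A : Set X) : Set X :=
  Subtype.val '' frontier {x : s | (x : X) ∈ A}

lemma holder_continuousOn {k : ℕ} {β L : ℝ} (hβ0 : 0 < β) (hL : 0 < L)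
    (τ : (Fin k → ℝ) → ℝ)
    (hHolder : ∀ x ∈ unitCube k, ∀ y ∈ unitCube k, |τ x - τ y| ≤ L * ‖x - y‖ ^ β) :
    ContinuousOn τ (unitCube k) := by
  rw [Metric.continuousOn_iff]
  intro x hx ε hε
  refine ⟨(ε / (2*L)) ^ β⁻¹, by positivity, fun y hy hdy => ?_⟩
  have h1 := hHolder y hy x hx
  have hnorm : ‖y - x‖ = dist y x := by rw [dist_eq_norm]
  calc dist (τ y) (τ x) = |τ y - τ x| := Real.dist_eq _ _
    _ ≤ L * ‖y - x‖ ^ β := h1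
    _ < L * ((ε/(2*L)) ^ β⁻¹) ^ β := by
        apply mul_lt_mul_of_pos_left _ hL
        apply Real.rpow_lt_rpow (norm_nonneg _) _ hβ0
        rw [hnorm]; exact hdy
    _ = ε / 2 := by
        rw [Real.rpow_inv_rpow (by positivity) (ne_of_gt hβ0)]
        field_simp
    _ < ε := by linarith

lemma bdry_subset {k : ℕ} (τ : (Fin k → ℝ) → ℝ)
    (hcont : ContinuousOn τ (unitCube k)) :
    bdryIn (cubeP k) {p : (Fin k → ℝ) × ℝ | p ∈ cubeP k ∧ τ p.1 < p.2}
      ⊆ {p | p ∈ cubeP k ∧ τ p.1 = p.2} := by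
  have hset : {x : (cubeP k) | (x : (Fin k → ℝ) × ℝ) ∈
      {p : (Fin k → ℝ) × ℝ | p ∈ cubeP k ∧ τ p.1 < p.2}}
      = {x : (cubeP k) | τ (x : (Fin k → ℝ) × ℝ).1 < (x : (Fin k → ℝ) × ℝ).2} := by
    ext x; simp only [Set.mem_setOf_eq]
    exact ⟨fun h => h.2, fun h => ⟨x.2, h⟩⟩
  have hf : Continuous (fun x : (cubeP k) => τ (x : (Fin k → ℝ) × ℝ).1) := by
    have hm : Continuous (fun x : (cubeP k) =>
        (⟨(x : (Fin k → ℝ) × ℝ).1, fun i _ => x.2.1 i (Set.mem_univ i)⟩ : (unitCube k))) := by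
      apply Continuous.subtype_mk
      exact continuous_fst.comp continuous_subtype_val
    exact (continuousOn_iff_continuous_restrict.mp hcont).comp hm
  have hg : Continuous (fun x : (cubeP k) => (x : (Fin k → ℝ) × ℝ).2) :=
    continuous_snd.comp continuous_subtype_val
  intro p hp
  obtain ⟨x, hx, rfl⟩ := hp
  rw [hset] at hx
  exact ⟨x.2, frontier_lt_subset_eq hf hg hx⟩

/-- for a `(β,L)`-Hölder change interface `τ : [0,1]^{d−1} → [0,1]`
(with respect to the maximum norm, which is the sup norm on `Fin (d−1) → ℝ`),
the number of grid hypercubes whose interior meets the boundary (in `[0,1]^d`) of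
the epigraph `Λ₊` satisfies `|B| ≤ (L + 2)·δ^{β−d}`. -/
theorem stmt14 (d n : ℕ) (hd : 2 ≤ d) (hn : 1 ≤ n)
    (β L : ℝ) (hβ : β ∈ Set.Ioc (0 : ℝ) 1) (hL : 0 < L)
    (τ : (Fin (d - 1) → ℝ) → ℝ)
    (hτr : ∀ x ∈ unitCube (d - 1), τ x ∈ Set.Icc (0 : ℝ) 1)
    (hHolder : ∀ x ∈ unitCube (d - 1), ∀ y ∈ unitCube (d - 1),
      |τ x - τ y| ≤ L * ‖x - y‖ ^ β) :
    (({αj : ((Fin (d - 1) → Fin n) × Fin n) |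
        (interior (SqP n (d - 1) αj.1 αj.2) ∩
          bdryIn (cubeP (d - 1))
            {p : (Fin (d - 1) → ℝ) × ℝ | p ∈ cubeP (d - 1) ∧ τ p.1 < p.2}).Nonempty}).ncard
            : ℝ)
      ≤ (L + 2) * (1 / (n : ℝ)) ^ (β - d) := by
  classical
  obtain ⟨hβ0, hβ1⟩ := hβ
  have hn0 : (0:ℝ) < n := by exact_mod_cast Nat.lt_of_lt_of_le Nat.zero_lt_one hn
  have hcont := holder_continuousOn hβ0 hL τ hHolder
  have hbdry := bdry_subset τ hcont
  set S : Set ((Fin (d - 1) → Fin n) × Fin n) := {αj : ((Fin (d - 1) → Fin n) × Fin n) |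
        (interior (SqP n (d - 1) αj.1 αj.2) ∩
          bdryIn (cubeP (d - 1))
            {p : (Fin (d - 1) → ℝ) × ℝ | p ∈ cubeP (d - 1) ∧ τ p.1 < p.2}).Nonempty} with hS
  set P : ℝ := (1 / (n:ℝ)) ^ β with hP
  have hPpos : 0 < P := Real.rpow_pos_of_pos (by positivity) _
  set C : ℝ := L * n * P with hC
  have hCpos : 0 < C := by positivity
  -- witness extraction
  have hW : ∀ γ j, (γ, j) ∈ S → ∃ x, x ∈ Sq n γ ∧ x ∈ unitCube (d-1) ∧
      (j:ℝ)/n < τ x ∧ τ x < ((j:ℝ)+1)/n := by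
    rintro γ j ⟨p, hpI, hpB⟩
    have hpB' := hbdry hpB
    have hI : p ∈ (interior (Sq n γ)) ×ˢ Set.Ioo ((j:ℝ)/n) (((j:ℝ)+1)/n) := by
      rw [SqP, interior_prod_eq, interior_Icc] at hpI; exact hpI
    refine ⟨p.1, interior_subset hI.1, hpB'.1.1, ?_, ?_⟩
    · rw [hpB'.2]; exact hI.2.1
    · rw [hpB'.2]; exact hI.2.2
  -- pairwise bound
  have hpair : ∀ γ j j', (γ, j) ∈ S → (γ, j') ∈ S → ((j' : Fin n) : ℝ) < (j : ℝ) + 1 + C := by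
    intro γ j j' hj hj'
    obtain ⟨x, hxS, hxU, hx1, hx2⟩ := hW γ j hj
    obtain ⟨x', hxS', hxU', hx1', hx2'⟩ := hW γ j' hj'
    have hdx : ‖x' - x‖ ≤ 1/n := by
      rw [pi_norm_le_iff_of_nonneg (by positivity)]
      intro i
      have h1 := hxS i (Set.mem_univ i)
      have h2 := hxS' i (Set.mem_univ i)
      rw [Pi.sub_apply, Real.norm_eq_abs, abs_sub_le_iff]
      have he : ((γ i : ℝ)+1)/n - (γ i : ℝ)/n = 1/n := by ring
      constructor <;> [skip; skip] <;>
        · simp only [Set.mem_Icc] at h1 h2; linarith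
    have hH := hHolder x' hxU' x hxU
    have hrp : ‖x' - x‖ ^ β ≤ P := by
      rw [hP]
      exact Real.rpow_le_rpow (norm_nonneg _) hdx (le_of_lt hβ0)
    have habs : τ x' - τ x ≤ L * P := by
      have := le_trans (le_abs_self _) hH
      nlinarith
    -- j'/n < τ x' ≤ τ x + L*P < (j+1)/n + L*P
    have hkey : ((j' : Fin n) : ℝ)/n < ((j : Fin n) : ℝ)/n + 1/n + L * P := by
      have : (1:ℝ)/n + (j:ℝ)/n = ((j:ℝ)+1)/n := by ring
      linarith
    have := mul_lt_mul_of_pos_right hkey hn0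
    have hne : (n:ℝ) ≠ 0 := ne_of_gt hn0
    rw [div_mul_cancel₀ _ hne] at this
    calc ((j' : Fin n) : ℝ) < (((j : Fin n):ℝ)/n + 1/n + L*P) * n := this
      _ = (j : ℝ) + 1 + C := by rw [hC]; field_simp
  -- counting
  have hfin : S.Finite := Set.toFinite S
  set F : Finset ((Fin (d - 1) → Fin n) × Fin n) := hfin.toFinset with hF
  have hcard : S.ncard = F.card := Set.ncard_eq_toFinset_card S hfin
  have hfib : ∀ γ : Fin (d-1) → Fin n,
      ((F.filter (fun x => x.1 = γ)).card : ℝ) ≤ C + 2 := by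
    intro γ
    set Jp := F.filter (fun x => x.1 = γ) with hJp
    have hinj : Set.InjOn Prod.snd (Jp : Set ((Fin (d-1) → Fin n) × Fin n)) := by
      intro a ha b hb hab
      simp only [hJp, Finset.coe_filter, Set.mem_setOf_eq] at ha hb
      exact Prod.ext (ha.2.trans hb.2.symm) hab
    set J := Jp.image Prod.snd with hJ
    have hJcard : J.card = Jp.card := Finset.card_image_of_injOn hinj
    have hmemJ : ∀ j ∈ J, (γ, j) ∈ S := by
      intro j hj
      simp only [hJ, Finset.mem_image, hJp, Finset.mem_filter, hF,
        Set.Finite.mem_toFinset] at hj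
      obtain ⟨a, ⟨haS, ha1⟩, ha2⟩ := hj
      have : (γ, j) = a := Prod.ext ha1.symm ha2.symm
      rw [this]; exact haS
    rcases J.eq_empty_or_nonempty with hJe | hJne
    · rw [← hJcard, hJe]; simp; positivity
    · set j0 := J.min' hJne with hj0
      set j1 := J.max' hJne with hj1
      have hle : j0 ≤ j1 := J.min'_le _ (J.max'_mem hJne)
      have hsub : J ⊆ Finset.Icc j0 j1 := fun j hj =>
        Finset.mem_Icc.mpr ⟨J.min'_le j hj, J.le_max' j hj⟩
      have hcle : J.card ≤ (Finset.Icc j0 j1).card := Finset.card_le_card hsub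
      have hIcc : (Finset.Icc j0 j1).card = (j1 : ℕ) + 1 - (j0 : ℕ) := by
        exact Fin.card_Icc j0 j1
      have hlev : (j0 : ℕ) ≤ (j1 : ℕ) := hle
      have hcR : (J.card : ℝ) ≤ ((j1 : Fin n) : ℝ) + 1 - ((j0 : Fin n) : ℝ) := by
        rw [hIcc] at hcle
        have : ((j1:ℕ) + 1 - (j0:ℕ) : ℕ) = ((j1:ℕ) + 1) - (j0:ℕ) := rfl
        have hcast : (((j1:ℕ) + 1 - (j0:ℕ) : ℕ) : ℝ)
            = ((j1:ℕ) : ℝ) + 1 - ((j0:ℕ) : ℝ) := by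
          rw [Nat.cast_sub (le_trans hlev (Nat.le_succ _))]
          push_cast; ring
        calc (J.card : ℝ) ≤ (((j1:ℕ) + 1 - (j0:ℕ) : ℕ) : ℝ) := by exact_mod_cast hcle
          _ = ((j1:ℕ) : ℝ) + 1 - ((j0:ℕ) : ℝ) := hcast
      have hp := hpair γ j0 j1 (hmemJ j0 (J.min'_mem hJne)) (hmemJ j1 (J.max'_mem hJne))
      rw [← hJcard]
      linarith
  -- sum over fibers
  have hsum : F.card = ∑ γ : (Fin (d-1) → Fin n), (F.filter (fun x => x.1 = γ)).card :=
    Finset.card_eq_sum_card_fiberwise (fun x _ => Finset.mem_univ _)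
  have htot : (F.card : ℝ) ≤ ((n:ℝ) ^ (d-1)) * (C + 2) := by
    rw [hsum]
    push_cast
    calc ∑ γ : (Fin (d-1) → Fin n), ((F.filter (fun x => x.1 = γ)).card : ℝ)
        ≤ ∑ _γ : (Fin (d-1) → Fin n), (C + 2) := Finset.sum_le_sum (fun γ _ => hfib γ)
      _ = (Fintype.card (Fin (d-1) → Fin n)) * (C + 2) := by
          rw [Finset.sum_const, Finset.card_univ, nsmul_eq_mul]
      _ = ((n:ℝ) ^ (d-1)) * (C + 2) := by
          rw [Fintype.card_fun]
          push_cast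
          simp
  -- final arithmetic
  have hk1 : (d - 1) + 1 = d := Nat.sub_add_cancel (le_trans one_le_two hd)
  have hfinal : ((n:ℝ) ^ (d-1)) * (C + 2) ≤ (L + 2) * (1 / (n : ℝ)) ^ (β - d) := by
    have hrhs : (1 / (n : ℝ)) ^ (β - (d:ℝ)) = P * (n:ℝ)^d := by
      rw [Real.rpow_sub (by positivity), hP]
      rw [Real.rpow_natCast]
      field_simp
      rw [← mul_pow, one_div_mul_cancel hn0.ne', one_pow]
    have hPn : 1/(n:ℝ) ≤ P := by
      rw [hP]
      nth_rewrite 1 [show (1:ℝ)/n = (1/(n:ℝ)) ^ (1:ℝ) by rw [Real.rpow_one]]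
      exact Real.rpow_le_rpow_of_exponent_ge (by positivity)
        (by rw [div_le_one hn0]; exact_mod_cast hn) hβ1
    have hnk : ((n:ℝ) ^ (d-1)) * (n:ℝ) = (n:ℝ)^d := by
      rw [← pow_succ, hk1]
    have h2 : ((n:ℝ) ^ (d-1)) ≤ P * (n:ℝ)^d := by
      have h4 := mul_le_mul_of_nonneg_right hPn (le_of_lt (pow_pos hn0 d))
      have h3 : ((n:ℝ)^(d-1)) = (1/(n:ℝ)) * (n:ℝ)^d := by
        rw [← hnk]; field_simp
      rw [h3]; exact h4
    rw [hrhs, hC]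
    have hnkpos : (0:ℝ) < (n:ℝ)^(d-1) := pow_pos hn0 _
    nlinarith [hnkpos, hPpos, h2, hnk]
  rw [hS] at hcard ⊢
  rw [hcard]
  exact le_trans htot hfinal
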